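/- arXiv:2510.04583 — 3 statements merged into one kernel-verified Lean document; each statement's English description precedes it below -/
import Mathlib

section
/- Let d ≥ 1, μ, y ∈ ℝ^d, γ > 0, and let Σ be a symmetric positive definite d×d real matrix. Then (1/2) ∫_{ℝ^d} ∫_{ℝ^d} exp(−‖x−x'‖²/γ²) φ_d(x; μ, Σ) φ_d(x'; μ, Σ) dx dx' − ∫_{ℝ^d} exp(−‖x−y‖²/γ²) φ_d(x; μ, Σ) dx + 1/2 = −det(I + (2/γ²)Σ)^{−1/2} exp(−(1/γ²) (y−μ)ᵀ (I + (2/γ²)Σ)⁻¹ (y−μ)) + (1/2) det(I + (4/γ²)Σ)^{−1/2} + 1/2. -/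
open MeasureTheory Matrix Real

/-- Density of the multivariate normal distribution `N(μ, S)` on `ℝ^d`. -/
noncomputable def mvnPdf {d : ℕ} (μ : Fin d → ℝ) (S : Matrix (Fin d) (Fin d) ℝ)
    (x : Fin d → ℝ) : ℝ :=
  (Real.sqrt ((2 * Real.pi) ^ d * S.det))⁻¹ *
    Real.exp (-(1 / 2) * ((x - μ) ⬝ᵥ (S⁻¹ *ᵥ (x - μ))))

section Aux
variable {d : ℕ}

lemma aux_sqrt_prod {ι : Type*} (s : Finset ι) (f : ι → ℝ) (h : ∀ i ∈ s, 0 ≤ f i) :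
    Real.sqrt (∏ i ∈ s, f i) = ∏ i ∈ s, Real.sqrt (f i) := by
  classical
  induction s using Finset.cons_induction with
  | empty => simp
  | cons i s hi ih =>
      rw [Finset.prod_cons, Finset.prod_cons, Real.sqrt_mul (h i (Finset.mem_cons_self i s)),
        ih fun j hj => h j (Finset.mem_cons_of_mem hj)]

lemma aux_mulVec_dot (N : Matrix (Fin d) (Fin d) ℝ) (u z : Fin d → ℝ) :
    (N *ᵥ u) ⬝ᵥ z = u ⬝ᵥ Nᵀ *ᵥ z := by
  rw [Matrix.mulVec_transpose, dotProduct_comm, Matrix.dotProduct_mulVec,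
    dotProduct_comm]

lemma aux_dv_symm (N : Matrix (Fin d) (Fin d) ℝ) (h : Nᵀ = N) (x y : Fin d → ℝ) :
    x ⬝ᵥ N *ᵥ y = y ⬝ᵥ N *ᵥ x := by
  rw [dotProduct_comm, aux_mulVec_dot, h]

lemma aux_integral_diag (a : Fin d → ℝ) :
    ∫ x : Fin d → ℝ, Real.exp (-∑ i, a i * x i ^ 2) = ∏ i, Real.sqrt (π / a i) := by
  have h1 : ∀ x : Fin d → ℝ, Real.exp (-∑ i, a i * x i ^ 2)
      = ∏ i, Real.exp (-(a i * x i ^ 2)) := by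
    intro x
    rw [← Real.exp_sum, ← Finset.sum_neg_distrib]
  simp_rw [h1]
  rw [MeasureTheory.integral_fintype_prod_volume_eq_prod
    (f := fun i (t : ℝ) => Real.exp (-(a i * t ^ 2)))]
  exact Finset.prod_congr rfl fun i _ => by
    simpa [neg_mul] using integral_gaussian (a i)

/-- Transpose of a real positive definite matrix equals itself. -/
lemma aux_posdef_transpose {A : Matrix (Fin d) (Fin d) ℝ} (hA : A.PosDef) : Aᵀ = A := by
  have := hA.isHermitian
  rwa [Matrix.IsHermitian, Matrix.conjTranspose_eq_transpose_of_trivial] at this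

/-- The central multivariate Gaussian integral. -/
lemma aux_integral_quad (A : Matrix (Fin d) (Fin d) ℝ) (hA : A.PosDef) :
    ∫ x : Fin d → ℝ, Real.exp (-(x ⬝ᵥ A *ᵥ x)) = Real.sqrt (π ^ d / A.det) := by
  classical
  have hH := hA.isHermitian
  set Q : Matrix (Fin d) (Fin d) ℝ := (hH.eigenvectorUnitary : Matrix (Fin d) (Fin d) ℝ) with hQdef
  have hstar : star Q = Qᵀ := by
    rw [Matrix.star_eq_conjTranspose, Matrix.conjTranspose_eq_transpose_of_trivial]
  have hQtQ : Qᵀ * Q = 1 := by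
    rw [← hstar]; exact Unitary.coe_star_mul_self hH.eigenvectorUnitary
  have hQQt : Q * Qᵀ = 1 := by
    rw [← hstar]; exact Unitary.coe_mul_star_self hH.eigenvectorUnitary
  have hdiag : (diagonal ((RCLike.ofReal : ℝ → ℝ) ∘ hH.eigenvalues) : Matrix (Fin d) (Fin d) ℝ)
      = diagonal hH.eigenvalues := by
    congr 1
  have hspec : A = Q * diagonal hH.eigenvalues * Qᵀ := by
    rw [← hdiag, ← hstar]; exact hH.spectral_theorem
  -- determinant of Q
  have hdetQ2 : Q.det * Q.det = 1 := by
    have := congrArg Matrix.det hQtQ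
    rwa [Matrix.det_mul, Matrix.det_transpose, Matrix.det_one] at this
  have hdetQ0 : Q.det ≠ 0 := by
    intro h; rw [h, mul_zero] at hdetQ2; exact zero_ne_one hdetQ2
  have habs : |Q.det| = 1 := by
    rcases mul_self_eq_one_iff.mp hdetQ2 with h | h <;> rw [h] <;> norm_num
  -- the change of variables
  have hinv : Invertible Q := Q.invertibleOfIsUnitDet (Ne.isUnit hdetQ0)
  let T : (Fin d → ℝ) ≃ₗ[ℝ] (Fin d → ℝ) := Q.toLinearEquiv' hinv
  let e : (Fin d → ℝ) ≃ᵐ (Fin d → ℝ) := T.toContinuousLinearEquiv.toHomeomorph.toMeasurableEquiv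
  have he : ⇑e = ⇑(Matrix.toLin' Q) := rfl
  have hmap : Measure.map (⇑e) volume = volume := by
    rw [he]
    have := MeasureTheory.Measure.map_linearMap_addHaar_pi_eq_smul_addHaar
      (f := Matrix.toLin' Q) (by rw [LinearMap.det_toLin']; exact hdetQ0) volume
    rw [this, LinearMap.det_toLin', abs_inv, habs]
    simp
  have key : ∀ u : Fin d → ℝ, (Q *ᵥ u) ⬝ᵥ A *ᵥ (Q *ᵥ u) = ∑ i, hH.eigenvalues i * u i ^ 2 := by
    intro u
    have hAQ : A * Q = Q * diagonal hH.eigenvalues := by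
      conv_lhs => rw [hspec]
      rw [Matrix.mul_assoc, hQtQ, Matrix.mul_one]
    have h1 : A *ᵥ (Q *ᵥ u) = Q *ᵥ (diagonal hH.eigenvalues *ᵥ u) := by
      rw [Matrix.mulVec_mulVec, Matrix.mulVec_mulVec, hAQ]
    rw [h1, aux_mulVec_dot, Matrix.mulVec_mulVec, hQtQ, Matrix.one_mulVec]
    unfold dotProduct
    exact Finset.sum_congr rfl fun i _ => by rw [Matrix.mulVec_diagonal]; ring
  calc ∫ x : Fin d → ℝ, Real.exp (-(x ⬝ᵥ A *ᵥ x))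
      = ∫ x : Fin d → ℝ, Real.exp (-(x ⬝ᵥ A *ᵥ x)) ∂(Measure.map (⇑e) volume) := by rw [hmap]
    _ = ∫ u : Fin d → ℝ, Real.exp (-((Q *ᵥ u) ⬝ᵥ A *ᵥ (Q *ᵥ u))) := by
        rw [MeasureTheory.integral_map_equiv]
        rfl
    _ = ∫ u : Fin d → ℝ, Real.exp (-∑ i, hH.eigenvalues i * u i ^ 2) := by
        simp_rw [key]
    _ = ∏ i, Real.sqrt (π / hH.eigenvalues i) := aux_integral_diag _
    _ = Real.sqrt (π ^ d / A.det) := by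
        rw [← aux_sqrt_prod _ _ fun i _ =>
          div_nonneg Real.pi_pos.le (hA.eigenvalues_pos i).le]
        congr 1
        rw [Finset.prod_div_distrib, Finset.prod_const, Finset.card_univ, Fintype.card_fin]
        congr 1
        have := hH.det_eq_prod_eigenvalues
        simpa using this.symm

lemma aux_complete_square (A B : Matrix (Fin d) (Fin d) ℝ) (hA : Aᵀ = A) (hB : Bᵀ = B)
    (hdet : (A + B).det ≠ 0) (a b x : Fin d → ℝ) :
    (x - a) ⬝ᵥ A *ᵥ (x - a) + (x - b) ⬝ᵥ B *ᵥ (x - b)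
      = (x - (A + B)⁻¹ *ᵥ (A *ᵥ a + B *ᵥ b)) ⬝ᵥ (A + B) *ᵥ
          (x - (A + B)⁻¹ *ᵥ (A *ᵥ a + B *ᵥ b))
        + (a - b) ⬝ᵥ (A * (A + B)⁻¹ * B) *ᵥ (a - b) := by
  set M := A + B with hMdef
  set K := M⁻¹ with hKdef
  have hM : Mᵀ = M := by rw [hMdef, Matrix.transpose_add, hA, hB]
  have hMK : M * K = 1 := Matrix.mul_nonsing_inv _ (Ne.isUnit hdet)
  have hKM : K * M = 1 := Matrix.nonsing_inv_mul _ (Ne.isUnit hdet)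
  have hKt : Kᵀ = K := by rw [hKdef, Matrix.transpose_nonsing_inv, hM]
  set w := A *ᵥ a + B *ᵥ b with hwdef
  set c := K *ᵥ w with hcdef
  have hMc : M *ᵥ c = w := by rw [hcdef, Matrix.mulVec_mulVec, hMK, Matrix.one_mulVec]
  have hAKB : A * K * B = B - B * K * B := by
    have h1 : A = M - B := (add_sub_cancel_right A B).symm
    rw [h1, Matrix.sub_mul, Matrix.sub_mul, hMK, Matrix.one_mul]
  have hBKA : B * K * A = A * K * B := by
    have h1 : A = M - B := (add_sub_cancel_right A B).symm
    rw [hAKB]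
    conv_lhs => rw [h1]
    rw [Matrix.mul_sub, Matrix.mul_assoc B K M, hKM, Matrix.mul_one]
  have hAKA : A * K * A = A - A * K * B := by
    have h1 : B = M - A := by rw [hMdef, add_sub_cancel_left]
    conv_rhs => rw [h1]
    rw [Matrix.mul_sub, Matrix.mul_assoc A K M, hKM, Matrix.mul_one, sub_sub_cancel]
  have hBKB : B * K * B = B - A * K * B := by rw [hAKB, sub_sub_cancel]
  have hAKBt : (A * K * B)ᵀ = A * K * B := by
    rw [Matrix.transpose_mul, Matrix.transpose_mul, hA, hB, hKt, ← Matrix.mul_assoc, hBKA]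
  have exp1 : ∀ (N : Matrix (Fin d) (Fin d) ℝ) (u v : Fin d → ℝ),
      (u - v) ⬝ᵥ N *ᵥ (u - v)
        = u ⬝ᵥ N *ᵥ u - u ⬝ᵥ N *ᵥ v - v ⬝ᵥ N *ᵥ u + v ⬝ᵥ N *ᵥ v := by
    intro N u v
    rw [Matrix.mulVec_sub, sub_dotProduct, dotProduct_sub, dotProduct_sub]
    ring
  have hq : ∀ (P P' : Matrix (Fin d) (Fin d) ℝ) (u v : Fin d → ℝ),
      (P *ᵥ u) ⬝ᵥ K *ᵥ (P' *ᵥ v) = u ⬝ᵥ (Pᵀ * K * P') *ᵥ v := by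
    intro P P' u v
    rw [Matrix.mulVec_mulVec, aux_mulVec_dot, Matrix.mulVec_mulVec, ← Matrix.mul_assoc]
  have hMx : ∀ u v : Fin d → ℝ, u ⬝ᵥ M *ᵥ v = u ⬝ᵥ A *ᵥ v + u ⬝ᵥ B *ᵥ v := by
    intro u v
    rw [hMdef, Matrix.add_mulVec, dotProduct_add]
  have hxMc : x ⬝ᵥ M *ᵥ c = x ⬝ᵥ A *ᵥ a + x ⬝ᵥ B *ᵥ b := by
    rw [Matrix.mulVec_mulVec]
    nth_rewrite 1 [hMdef]
    rw [hMK, Matrix.one_mulVec, hwdef, dotProduct_add]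
  have hcMx : c ⬝ᵥ M *ᵥ x = x ⬝ᵥ A *ᵥ a + x ⬝ᵥ B *ᵥ b := by
    rw [aux_dv_symm M hM, hxMc]
  have hcMc : c ⬝ᵥ M *ᵥ c
      = a ⬝ᵥ A *ᵥ a - a ⬝ᵥ (A * K * B) *ᵥ a + 2 * (a ⬝ᵥ (A * K * B) *ᵥ b)
        + (b ⬝ᵥ B *ᵥ b - b ⬝ᵥ (A * K * B) *ᵥ b) := by
    have h0 : c ⬝ᵥ M *ᵥ c = w ⬝ᵥ K *ᵥ w := by
      rw [hMc, hcdef, aux_mulVec_dot, hKt]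
    rw [h0, hwdef, add_dotProduct, Matrix.mulVec_add, dotProduct_add,
      dotProduct_add, hq, hq, hq, hq, hA, hB, hAKA, hBKA, hBKB,
      aux_dv_symm (A * K * B) hAKBt b a]
    rw [Matrix.sub_mulVec, dotProduct_sub, Matrix.sub_mulVec, dotProduct_sub]
    ring
  rw [exp1, exp1, exp1, exp1, hMx x x, hxMc, hcMx, hcMc,
    aux_dv_symm A hA a x, aux_dv_symm B hB b x, aux_dv_symm (A * K * B) hAKBt b a]
  ring

lemma aux_posdef_smul {A : Matrix (Fin d) (Fin d) ℝ} (hA : A.PosDef) {c : ℝ} (hc : 0 < c) :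
    (c • A).PosDef := by
  refine ⟨?_, fun x hx => ?_⟩
  · rw [Matrix.IsHermitian, Matrix.conjTranspose_smul, star_trivial,
      hA.isHermitian.eq]
  · exact (hA.smul hc).2 hx

lemma aux_posdef_one : (1 : Matrix (Fin d) (Fin d) ℝ).PosDef := by
  rw [← Matrix.diagonal_one]
  exact Matrix.PosDef.diagonal fun _ => one_pos

lemma aux_integral_quad_sub (A : Matrix (Fin d) (Fin d) ℝ) (hA : A.PosDef) (c : Fin d → ℝ) :
    ∫ x : Fin d → ℝ, Real.exp (-((x - c) ⬝ᵥ A *ᵥ (x - c))) = Real.sqrt (π ^ d / A.det) := by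
  rw [show (fun x : Fin d → ℝ => Real.exp (-((x - c) ⬝ᵥ A *ᵥ (x - c))))
      = fun x : Fin d → ℝ => (fun y => Real.exp (-(y ⬝ᵥ A *ᵥ y))) (x - c) from rfl,
    MeasureTheory.integral_sub_right_eq_self (fun y : Fin d → ℝ => Real.exp (-(y ⬝ᵥ A *ᵥ y))) c]
  exact aux_integral_quad A hA

lemma aux_gauss_product (A B : Matrix (Fin d) (Fin d) ℝ) (hA : A.PosDef) (hB : B.PosDef)
    (a b : Fin d → ℝ) :
    ∫ x : Fin d → ℝ,
        Real.exp (-((x - a) ⬝ᵥ A *ᵥ (x - a))) * Real.exp (-((x - b) ⬝ᵥ B *ᵥ (x - b)))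
      = Real.sqrt (π ^ d / (A + B).det)
          * Real.exp (-((a - b) ⬝ᵥ (A * (A + B)⁻¹ * B) *ᵥ (a - b))) := by
  have hM : (A + B).PosDef := hA.add hB
  have hdet : (A + B).det ≠ 0 := hM.det_pos.ne'
  have hpt : ∀ x : Fin d → ℝ,
      Real.exp (-((x - a) ⬝ᵥ A *ᵥ (x - a))) * Real.exp (-((x - b) ⬝ᵥ B *ᵥ (x - b)))
        = Real.exp (-((x - (A + B)⁻¹ *ᵥ (A *ᵥ a + B *ᵥ b)) ⬝ᵥ (A + B) *ᵥ
            (x - (A + B)⁻¹ *ᵥ (A *ᵥ a + B *ᵥ b))))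
          * Real.exp (-((a - b) ⬝ᵥ (A * (A + B)⁻¹ * B) *ᵥ (a - b))) := by
    intro x
    rw [← Real.exp_add, ← Real.exp_add, ← neg_add, ← neg_add,
      aux_complete_square A B (aux_posdef_transpose hA) (aux_posdef_transpose hB) hdet a b x]
  simp_rw [hpt]
  rw [MeasureTheory.integral_mul_const, aux_integral_quad_sub (A + B) hM]

set_option maxHeartbeats 1000000 in
/-- Gaussian expectation of an exponentiated quadratic kernel. -/
lemma aux_KA (γ : ℝ) (hγ : 0 < γ) (S : Matrix (Fin d) (Fin d) ℝ) (hS : S.PosDef)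
    (μ : Fin d → ℝ) (y : Fin d → ℝ) :
    ∫ x : Fin d → ℝ, Real.exp (-((x - y) ⬝ᵥ (x - y)) / γ ^ 2) * mvnPdf μ S x
      = (Real.sqrt ((1 + (2 / γ ^ 2) • S : Matrix (Fin d) (Fin d) ℝ).det))⁻¹ *
          Real.exp (-(1 / γ ^ 2) *
            ((y - μ) ⬝ᵥ (((1 : Matrix (Fin d) (Fin d) ℝ) + (2 / γ ^ 2) • S)⁻¹ *ᵥ (y - μ)))) := by
  have hγ2 : (0:ℝ) < γ ^ 2 := by positivity
  have hγ2' : (γ:ℝ) ^ 2 ≠ 0 := hγ2.ne'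
  have hdetS : S.det ≠ 0 := hS.det_pos.ne'
  set M2 : Matrix (Fin d) (Fin d) ℝ := 1 + (2 / γ ^ 2) • S with hM2def
  have hM2 : M2.PosDef := aux_posdef_one.add (aux_posdef_smul hS (by positivity))
  have hdetM2 : M2.det ≠ 0 := hM2.det_pos.ne'
  set B₀ : Matrix (Fin d) (Fin d) ℝ := (γ ^ 2)⁻¹ • (1 : Matrix (Fin d) (Fin d) ℝ) with hB₀def
  set A₀ : Matrix (Fin d) (Fin d) ℝ := (2:ℝ)⁻¹ • S⁻¹ with hA₀def
  have hB₀ : B₀.PosDef := aux_posdef_smul aux_posdef_one (by positivity)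
  have hA₀ : A₀.PosDef := aux_posdef_smul hS.inv (by norm_num)
  set N : ℝ := (Real.sqrt ((2 * Real.pi) ^ d * S.det))⁻¹ with hNdef
  -- rewrite the integrand
  have hker : ∀ x : Fin d → ℝ, Real.exp (-((x - y) ⬝ᵥ (x - y)) / γ ^ 2)
      = Real.exp (-((x - y) ⬝ᵥ B₀ *ᵥ (x - y))) := by
    intro x
    rw [hB₀def, Matrix.smul_mulVec, Matrix.one_mulVec, dotProduct_smul,
      smul_eq_mul]
    ring_nf
  have hpdf : ∀ x : Fin d → ℝ, mvnPdf μ S x = N * Real.exp (-((x - μ) ⬝ᵥ A₀ *ᵥ (x - μ))) := by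
    intro x
    rw [mvnPdf, hA₀def, Matrix.smul_mulVec, dotProduct_smul, smul_eq_mul, hNdef]
    norm_num
  have hstep : ∀ x : Fin d → ℝ,
      Real.exp (-((x - y) ⬝ᵥ (x - y)) / γ ^ 2) * mvnPdf μ S x
        = (Real.exp (-((x - y) ⬝ᵥ B₀ *ᵥ (x - y)))
            * Real.exp (-((x - μ) ⬝ᵥ A₀ *ᵥ (x - μ)))) * N := by
    intro x; rw [hker, hpdf]; ring
  simp_rw [hstep]
  rw [MeasureTheory.integral_mul_const, aux_gauss_product B₀ A₀ hB₀ hA₀ y μ]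
  -- matrix algebra
  have hSinvS : S⁻¹ * S = 1 := Matrix.nonsing_inv_mul S (Ne.isUnit hdetS)
  have hSSinv : S * S⁻¹ = 1 := Matrix.mul_nonsing_inv S (Ne.isUnit hdetS)
  have hfact1 : B₀ + A₀ = (2:ℝ)⁻¹ • (S⁻¹ * M2) := by
    rw [hM2def, Matrix.mul_add, Matrix.mul_one, mul_smul_comm, hSinvS, smul_add, smul_smul]
    have : (2:ℝ)⁻¹ * (2 / γ ^ 2) = (γ ^ 2)⁻¹ := by field_simp
    rw [this, hB₀def, hA₀def, add_comm]
  have hdet1 : (B₀ + A₀).det = ((2:ℝ)⁻¹) ^ d * ((S.det)⁻¹ * M2.det) := by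
    rw [hfact1, Matrix.det_smul, Matrix.det_mul, Matrix.det_nonsing_inv, Fintype.card_fin,
      Ring.inverse_eq_inv']
  have hinv1 : (B₀ + A₀)⁻¹ = (2:ℝ) • (M2⁻¹ * S) := by
    apply Matrix.inv_eq_right_inv
    rw [hfact1, Matrix.smul_mul, Matrix.mul_smul, smul_smul]
    norm_num
    rw [Matrix.mul_assoc, ← Matrix.mul_assoc M2 M2⁻¹ S,
      Matrix.mul_nonsing_inv _ (Ne.isUnit hdetM2), Matrix.one_mul, hSinvS]
  have hcombo : B₀ * (B₀ + A₀)⁻¹ * A₀ = (γ ^ 2)⁻¹ • M2⁻¹ := by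
    rw [hinv1, hB₀def, hA₀def, Matrix.smul_mul, Matrix.one_mul, Matrix.mul_smul,
      Matrix.smul_mul, Matrix.smul_mul, Matrix.mul_assoc, hSSinv, Matrix.mul_one, smul_smul, smul_smul]
    congr 1
    field_simp
  rw [hdet1, hcombo]
  -- scalar simplification
  have hdet1' : π ^ d / (((2:ℝ)⁻¹) ^ d * ((S.det)⁻¹ * M2.det))
      = ((2 * π) ^ d * S.det) * (M2.det)⁻¹ := by
    rw [mul_pow, inv_pow]
    field_simp
  have hP : (0:ℝ) < (2 * π) ^ d * S.det := mul_pos (pow_pos (by positivity) d) hS.det_pos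
  have hexp : ((y - μ) ⬝ᵥ ((γ ^ 2)⁻¹ • M2⁻¹) *ᵥ (y - μ))
      = (γ ^ 2)⁻¹ * ((y - μ) ⬝ᵥ M2⁻¹ *ᵥ (y - μ)) := by
    rw [Matrix.smul_mulVec, dotProduct_smul, smul_eq_mul]
  have hsq : Real.sqrt ((2 * π) ^ d * S.det) ≠ 0 := (Real.sqrt_pos.mpr hP).ne'
  have hfin : ∀ u v e : ℝ, u ≠ 0 → u * v * e * u⁻¹ = v * e := by
    intro u v e hu; field_simp
  rw [hdet1', Real.sqrt_mul hP.le, Real.sqrt_inv, hexp, hNdef, one_div, neg_mul]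
  exact hfin _ _ _ hsq

set_option maxHeartbeats 1000000 in
lemma aux_KB (γ : ℝ) (hγ : 0 < γ) (S : Matrix (Fin d) (Fin d) ℝ) (hS : S.PosDef)
    (μ : Fin d → ℝ) :
    ∫ x' : Fin d → ℝ,
        ((Real.sqrt ((1 + (2 / γ ^ 2) • S : Matrix (Fin d) (Fin d) ℝ).det))⁻¹ *
          Real.exp (-(1 / γ ^ 2) *
            ((x' - μ) ⬝ᵥ (((1 : Matrix (Fin d) (Fin d) ℝ) + (2 / γ ^ 2) • S)⁻¹ *ᵥ (x' - μ)))))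
          * mvnPdf μ S x'
      = (Real.sqrt ((1 + (4 / γ ^ 2) • S : Matrix (Fin d) (Fin d) ℝ).det))⁻¹ := by
  have hγ2 : (0:ℝ) < γ ^ 2 := by positivity
  have hγ2' : (γ:ℝ) ^ 2 ≠ 0 := hγ2.ne'
  have hdetS : S.det ≠ 0 := hS.det_pos.ne'
  set M2 : Matrix (Fin d) (Fin d) ℝ := 1 + (2 / γ ^ 2) • S with hM2def
  set M4 : Matrix (Fin d) (Fin d) ℝ := 1 + (4 / γ ^ 2) • S with hM4def
  have hM2 : M2.PosDef := aux_posdef_one.add (aux_posdef_smul hS (by positivity))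
  have hdetM2 : M2.det ≠ 0 := hM2.det_pos.ne'
  set B₁ : Matrix (Fin d) (Fin d) ℝ := (γ ^ 2)⁻¹ • M2⁻¹ with hB₁def
  set A₀ : Matrix (Fin d) (Fin d) ℝ := (2:ℝ)⁻¹ • S⁻¹ with hA₀def
  have hB₁ : B₁.PosDef := aux_posdef_smul hM2.inv (by positivity)
  have hA₀ : A₀.PosDef := aux_posdef_smul hS.inv (by norm_num)
  set N : ℝ := (Real.sqrt ((2 * Real.pi) ^ d * S.det))⁻¹ with hNdef
  have hSinvS : S⁻¹ * S = 1 := Matrix.nonsing_inv_mul S (Ne.isUnit hdetS)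
  have hstep : ∀ x' : Fin d → ℝ,
      ((Real.sqrt (M2.det))⁻¹ *
          Real.exp (-(1 / γ ^ 2) * ((x' - μ) ⬝ᵥ M2⁻¹ *ᵥ (x' - μ)))) * mvnPdf μ S x'
        = (Real.exp (-((x' - μ) ⬝ᵥ B₁ *ᵥ (x' - μ)))
            * Real.exp (-((x' - μ) ⬝ᵥ A₀ *ᵥ (x' - μ)))) * ((Real.sqrt (M2.det))⁻¹ * N) := by
    intro x'
    have h1 : ((x' - μ) ⬝ᵥ B₁ *ᵥ (x' - μ))
        = (γ ^ 2)⁻¹ * ((x' - μ) ⬝ᵥ M2⁻¹ *ᵥ (x' - μ)) := by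
      rw [hB₁def, Matrix.smul_mulVec, dotProduct_smul, smul_eq_mul]
    have h2 : mvnPdf μ S x' = N * Real.exp (-((x' - μ) ⬝ᵥ A₀ *ᵥ (x' - μ))) := by
      rw [mvnPdf, hA₀def, Matrix.smul_mulVec, dotProduct_smul, smul_eq_mul, hNdef]
      norm_num
    rw [h1, h2, one_div]
    ring
  simp_rw [hstep]
  rw [MeasureTheory.integral_mul_const, aux_gauss_product B₁ A₀ hB₁ hA₀ μ μ, sub_self,
    zero_dotProduct, neg_zero, Real.exp_zero, mul_one]
  -- commutation of S and M2⁻¹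
  have hSM2 : S * M2 = M2 * S := by
    rw [hM2def, Matrix.mul_add, Matrix.add_mul, Matrix.mul_one, Matrix.one_mul,
      Matrix.mul_smul, Matrix.smul_mul]
  have hcomm : M2⁻¹ * S = S * M2⁻¹ := by
    calc M2⁻¹ * S
        = M2⁻¹ * S * (M2 * M2⁻¹) := by
          rw [Matrix.mul_nonsing_inv _ (Ne.isUnit hdetM2), Matrix.mul_one]
      _ = M2⁻¹ * (S * M2) * M2⁻¹ := by simp only [Matrix.mul_assoc]
      _ = M2⁻¹ * (M2 * S) * M2⁻¹ := by rw [hSM2]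
      _ = S * M2⁻¹ := by
          rw [← Matrix.mul_assoc M2⁻¹ M2 S, Matrix.nonsing_inv_mul _ (Ne.isUnit hdetM2),
            Matrix.one_mul]
  have hsc : (4:ℝ)/γ^2 = 2/γ^2 + 2/γ^2 := by ring
  have hM4split : M4 = M2 + (2 / γ ^ 2) • S := by
    rw [hM4def, hsc, add_smul, ← add_assoc, ← hM2def]
  have hfact3 : B₁ + A₀ = (2:ℝ)⁻¹ • (S⁻¹ * (M2⁻¹ * M4)) := by
    have e1 : M2⁻¹ * M4 = 1 + (2 / γ ^ 2) • (S * M2⁻¹) := by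
      rw [hM4split, Matrix.mul_add, Matrix.nonsing_inv_mul _ (Ne.isUnit hdetM2),
        mul_smul_comm, hcomm]
    rw [e1, Matrix.mul_add, Matrix.mul_one, mul_smul_comm, ← Matrix.mul_assoc, hSinvS,
      Matrix.one_mul, smul_add, smul_smul]
    have : (2:ℝ)⁻¹ * (2 / γ ^ 2) = (γ ^ 2)⁻¹ := by field_simp
    rw [this, hB₁def, hA₀def, add_comm]
  have hdet3 : (B₁ + A₀).det = ((2:ℝ)⁻¹) ^ d * ((S.det)⁻¹ * ((M2.det)⁻¹ * M4.det)) := by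
    rw [hfact3, Matrix.det_smul, Matrix.det_mul, Matrix.det_mul, Matrix.det_nonsing_inv,
      Matrix.det_nonsing_inv, Fintype.card_fin]
    simp [Ring.inverse_eq_inv']
  have hdet3' : π ^ d / (((2:ℝ)⁻¹) ^ d * ((S.det)⁻¹ * ((M2.det)⁻¹ * M4.det)))
      = ((2 * π) ^ d * S.det * M2.det) * (M4.det)⁻¹ := by
    have hdetM4 : M4.det ≠ 0 :=
      (aux_posdef_one.add (aux_posdef_smul hS (by positivity))).det_pos.ne'
    rw [mul_pow, inv_pow]
    field_simp
  have hP : (0:ℝ) < (2 * π) ^ d * S.det := mul_pos (pow_pos (by positivity) d) hS.det_pos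
  have hM2pos : (0:ℝ) < M2.det := hM2.det_pos
  rw [hdet3, hdet3', Real.sqrt_mul (by positivity : (0:ℝ) ≤ (2 * π) ^ d * S.det * M2.det),
    Real.sqrt_inv, Real.sqrt_mul hP.le]
  have hsq : Real.sqrt ((2 * π) ^ d * S.det) ≠ 0 := (Real.sqrt_pos.mpr hP).ne'
  have hsqM2 : Real.sqrt M2.det ≠ 0 := (Real.sqrt_pos.mpr hM2pos).ne'
  rw [hNdef]
  have hfin2 : ∀ p m e : ℝ, p ≠ 0 → m ≠ 0 → p * m * e * (m⁻¹ * p⁻¹) = e := by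
    intro p m e hp hm
    field_simp
  exact hfin2 _ _ _ hsq hsqM2

end Aux

/-- Closed-form value of the Gaussian kernel score `S_k(N(μ,S), y)`.
Here `‖v‖² = v ⬝ᵥ v` is the squared Euclidean norm. -/
theorem stmt_8 (d : ℕ) (hd : 1 ≤ d) (μ y : Fin d → ℝ) (γ : ℝ) (hγ : 0 < γ)
    (S : Matrix (Fin d) (Fin d) ℝ) (hS : S.PosDef) :
    (1 / 2) * (∫ x' : Fin d → ℝ, ∫ x : Fin d → ℝ,
        Real.exp (-((x - x') ⬝ᵥ (x - x')) / γ ^ 2) * mvnPdf μ S x * mvnPdf μ S x')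
      - (∫ x : Fin d → ℝ, Real.exp (-((x - y) ⬝ᵥ (x - y)) / γ ^ 2) * mvnPdf μ S x)
      + 1 / 2
      = -((Real.sqrt ((1 + (2 / γ ^ 2) • S : Matrix (Fin d) (Fin d) ℝ).det))⁻¹ *
            Real.exp (-(1 / γ ^ 2) *
              ((y - μ) ⬝ᵥ (((1 : Matrix (Fin d) (Fin d) ℝ) + (2 / γ ^ 2) • S)⁻¹ *ᵥ (y - μ)))))
        + (1 / 2) * (Real.sqrt ((1 + (4 / γ ^ 2) • S : Matrix (Fin d) (Fin d) ℝ).det))⁻¹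
        + 1 / 2 := by
  have hdouble : (∫ x' : Fin d → ℝ, ∫ x : Fin d → ℝ,
      Real.exp (-((x - x') ⬝ᵥ (x - x')) / γ ^ 2) * mvnPdf μ S x * mvnPdf μ S x')
      = (Real.sqrt ((1 + (4 / γ ^ 2) • S : Matrix (Fin d) (Fin d) ℝ).det))⁻¹ := by
    have h1 : ∀ x' : Fin d → ℝ, (∫ x : Fin d → ℝ,
        Real.exp (-((x - x') ⬝ᵥ (x - x')) / γ ^ 2) * mvnPdf μ S x * mvnPdf μ S x')
        = ((Real.sqrt ((1 + (2 / γ ^ 2) • S : Matrix (Fin d) (Fin d) ℝ).det))⁻¹ *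
            Real.exp (-(1 / γ ^ 2) *
              ((x' - μ) ⬝ᵥ (((1 : Matrix (Fin d) (Fin d) ℝ) + (2 / γ ^ 2) • S)⁻¹ *ᵥ (x' - μ)))))
            * mvnPdf μ S x' := by
      intro x'
      rw [MeasureTheory.integral_mul_const, aux_KA γ hγ S hS μ x']
    simp_rw [h1]
    exact aux_KB γ hγ S hS μ
  rw [hdouble, aux_KA γ hγ S hS μ y]
  ring
end

section
/- Let a, b ∈ (0,1) and set ᾱ := a·b, β := 1 − a, γ₀ := β√b/(1−ᾱ), γ₁ := (1−b)√a/(1−ᾱ), γ₂ := 1 + (√ᾱ − 1)(√a + √b)/(1−ᾱ). Then for all y, ε, f ∈ ℝ: γ₀ · ( (y − (1 − √ᾱ) f − √(1−ᾱ) ε)/√ᾱ ) + γ₁ y + γ₂ f = (1/√a) · ( y − ((1−a)/√(1−ᾱ)) ε − (1 − √a) f ). -/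
open Real

/-- The mean of CARD's sampling update `γ₀ ŷ₀ + γ₁ y_t + γ₂ f_φ(x)` equals
`(1/√α_t)(y_t − ((1−α_t)/√(1−ᾱ_t)) ε_θ − (1−√α_t) f_φ(x))`. -/
theorem stmt_12 (a b : ℝ) (ha : a ∈ Set.Ioo (0 : ℝ) 1) (hb : b ∈ Set.Ioo (0 : ℝ) 1)
    (abar β γ₀ γ₁ γ₂ : ℝ)
    (habar : abar = a * b) (hβ : β = 1 - a)
    (hγ₀ : γ₀ = β * Real.sqrt b / (1 - abar))
    (hγ₁ : γ₁ = (1 - b) * Real.sqrt a / (1 - abar))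
    (hγ₂ : γ₂ = 1 + (Real.sqrt abar - 1) * (Real.sqrt a + Real.sqrt b) / (1 - abar)) :
    ∀ y ε f : ℝ,
      γ₀ * ((y - (1 - Real.sqrt abar) * f - Real.sqrt (1 - abar) * ε) / Real.sqrt abar)
          + γ₁ * y + γ₂ * f
        = (1 / Real.sqrt a) *
            (y - ((1 - a) / Real.sqrt (1 - abar)) * ε - (1 - Real.sqrt a) * f) := by

  intro y ε f
  obtain ⟨ha0, ha1⟩ := ha
  obtain ⟨hb0, hb1⟩ := hb
  have hab : a * b < 1 := by nlinarith
  have hs : Real.sqrt (a*b) = Real.sqrt a * Real.sqrt b := Real.sqrt_mul ha0.le b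
  have hsa : Real.sqrt a ^ 2 = a := Real.sq_sqrt ha0.le
  have hsb : Real.sqrt b ^ 2 = b := Real.sq_sqrt hb0.le
  have hss : Real.sqrt (1 - a*b) ^ 2 = 1 - a*b := Real.sq_sqrt (by linarith)
  have hsa0 : 0 < Real.sqrt a := Real.sqrt_pos.2 ha0
  have hsb0 : 0 < Real.sqrt b := Real.sqrt_pos.2 hb0
  have hss0 : 0 < Real.sqrt (1 - a*b) := Real.sqrt_pos.2 (by linarith)
  subst habar hβ hγ₀ hγ₁ hγ₂
  rw [hs]
  set sa := Real.sqrt a with hsadef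
  set sb := Real.sqrt b with hsbdef
  set s := Real.sqrt (1 - a*b) with hsdef
  clear_value sa sb s
  rw [← hsa, ← hsb] at hss ⊢
  rw [← hss]
  have hsne : s ≠ 0 := ne_of_gt hss0
  have hsane : sa ≠ 0 := ne_of_gt hsa0
  have hsbne : sb ≠ 0 := ne_of_gt hsb0
  have h1 : s^2 ≠ 0 := pow_ne_zero 2 hsne
  field_simp
  linear_combination (f - y) * hss
end

section
/- Let d ≥ 1, let a, b ∈ (0,1) with ᾱ := a·b, let σ > 0 satisfy σ² ≤ 1 − b, and let y₀, f ∈ ℝ^d. For y ∈ ℝ^d define m(y) := √b · y₀ + (1 − √b) f + √(1 − b − σ²) · ( y − √ᾱ y₀ − (1 − √ᾱ) f )/√(1−ᾱ). Then for every y' ∈ ℝ^d, ∫_{ℝ^d} φ_d(y'; m(y), σ² I) · φ_d(y; √ᾱ y₀ + (1 − √ᾱ) f, (1−ᾱ) I) dy = φ_d(y'; √b y₀ + (1 − √b) f, (1−b) I). -/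
open MeasureTheory Matrix Real

lemma sqrt_pow' (x : ℝ) (hx : 0 ≤ x) (n : ℕ) : Real.sqrt (x ^ n) = Real.sqrt x ^ n := by
  induction n with
  | zero => simp
  | succ n ih => rw [pow_succ, pow_succ, Real.sqrt_mul (by positivity), ih]

lemma mvnPdf_smul_one {d : ℕ} (c : ℝ) (hc : 0 < c) (μ x : Fin d → ℝ) :
    mvnPdf μ (c • (1 : Matrix (Fin d) (Fin d) ℝ)) x
      = ∏ i, (Real.sqrt (2 * π * c))⁻¹ * Real.exp (-(x i - μ i) ^ 2 / (2 * c)) := by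
  have hinv : (c • (1 : Matrix (Fin d) (Fin d) ℝ))⁻¹ = c⁻¹ • 1 := by
    apply Matrix.inv_eq_right_inv
    rw [Matrix.smul_mul, Matrix.mul_smul, one_mul, smul_smul, mul_inv_cancel₀ hc.ne', one_smul]
  unfold mvnPdf
  rw [hinv, Matrix.det_smul, Matrix.det_one, Fintype.card_fin, mul_one,
    Matrix.smul_mulVec, Matrix.one_mulVec]
  rw [Finset.prod_mul_distrib, Finset.prod_const, Finset.card_univ, Fintype.card_fin,
    ← Real.exp_sum]
  congr 1
  · rw [← mul_pow, sqrt_pow' _ (by positivity), inv_pow]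
  · rw [Real.exp_eq_exp, dotProduct_smul, smul_eq_mul, dotProduct, Finset.mul_sum,
      Finset.mul_sum]
    refine Finset.sum_congr rfl fun i _ => ?_
    simp only [Pi.sub_apply]
    field_simp

lemma conv1d₀ (s τ c w : ℝ) (hs : 0 < s) (hτ : 0 < τ) :
    ∫ t : ℝ, (Real.sqrt (2 * π * s))⁻¹ * Real.exp (-(w - c * t) ^ 2 / (2 * s)) *
        ((Real.sqrt (2 * π * τ))⁻¹ * Real.exp (-t ^ 2 / (2 * τ)))
      = (Real.sqrt (2 * π * (s + c ^ 2 * τ)))⁻¹ *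
          Real.exp (-w ^ 2 / (2 * (s + c ^ 2 * τ))) := by
  have hπ := Real.pi_pos
  set A : ℝ := c ^ 2 / s + 1 / τ with hA_def
  set V : ℝ := s + c ^ 2 * τ with hV_def
  have hV : 0 < V := by positivity
  have hA : 0 < A := by positivity
  have hstA : s * τ * A = V := by rw [hA_def, hV_def]; field_simp <;> ring
  set t₀ : ℝ := c * w * τ / V with ht₀_def
  have key : ∀ t : ℝ, -(w - c * t) ^ 2 / (2 * s) + -t ^ 2 / (2 * τ)
      = -(A / 2) * (t - t₀) ^ 2 + -w ^ 2 / (2 * V) := by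
    intro t
    rw [hA_def, ht₀_def, hV_def]
    field_simp
    ring
  have step : ∀ t : ℝ,
      (Real.sqrt (2 * π * s))⁻¹ * Real.exp (-(w - c * t) ^ 2 / (2 * s)) *
        ((Real.sqrt (2 * π * τ))⁻¹ * Real.exp (-t ^ 2 / (2 * τ)))
      = ((Real.sqrt (2 * π * s))⁻¹ * (Real.sqrt (2 * π * τ))⁻¹ *
          Real.exp (-w ^ 2 / (2 * V))) * Real.exp (-(A / 2) * (t - t₀) ^ 2) := by
    intro t
    rw [show (Real.sqrt (2 * π * s))⁻¹ * Real.exp (-(w - c * t) ^ 2 / (2 * s)) *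
        ((Real.sqrt (2 * π * τ))⁻¹ * Real.exp (-t ^ 2 / (2 * τ)))
      = (Real.sqrt (2 * π * s))⁻¹ * (Real.sqrt (2 * π * τ))⁻¹ *
        (Real.exp (-(w - c * t) ^ 2 / (2 * s)) * Real.exp (-t ^ 2 / (2 * τ))) by ring,
      ← Real.exp_add, key t, Real.exp_add]
    ring
  simp_rw [step]
  rw [integral_const_mul]
  have hshift : ∫ t : ℝ, Real.exp (-(A / 2) * (t - t₀) ^ 2)
      = ∫ t : ℝ, Real.exp (-(A / 2) * t ^ 2) :=
    integral_sub_right_eq_self (μ := volume) (fun u => Real.exp (-(A / 2) * u ^ 2)) t₀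
  rw [hshift, integral_gaussian]
  have hsqrt : (Real.sqrt (2 * π * s))⁻¹ * (Real.sqrt (2 * π * τ))⁻¹ *
      Real.sqrt (π / (A / 2)) = (Real.sqrt (2 * π * V))⁻¹ := by
    rw [← Real.sqrt_inv, ← Real.sqrt_inv, ← Real.sqrt_inv,
      ← Real.sqrt_mul (by positivity), ← Real.sqrt_mul (by positivity)]
    congr 1
    rw [← hstA]
    field_simp
  calc (Real.sqrt (2 * π * s))⁻¹ * (Real.sqrt (2 * π * τ))⁻¹ *
        Real.exp (-w ^ 2 / (2 * V)) * Real.sqrt (π / (A / 2))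
      = ((Real.sqrt (2 * π * s))⁻¹ * (Real.sqrt (2 * π * τ))⁻¹ *
          Real.sqrt (π / (A / 2))) * Real.exp (-w ^ 2 / (2 * V)) := by ring
    _ = (Real.sqrt (2 * π * V))⁻¹ * Real.exp (-w ^ 2 / (2 * V)) := by rw [hsqrt]

lemma conv1d (s τ c w m : ℝ) (hs : 0 < s) (hτ : 0 < τ) :
    ∫ t : ℝ, (Real.sqrt (2 * π * s))⁻¹ * Real.exp (-(w - c * (t - m)) ^ 2 / (2 * s)) *
        ((Real.sqrt (2 * π * τ))⁻¹ * Real.exp (-(t - m) ^ 2 / (2 * τ)))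
      = (Real.sqrt (2 * π * (s + c ^ 2 * τ)))⁻¹ *
          Real.exp (-w ^ 2 / (2 * (s + c ^ 2 * τ))) := by
  rw [integral_sub_right_eq_self (μ := volume) (fun u => (Real.sqrt (2 * π * s))⁻¹ *
    Real.exp (-(w - c * u) ^ 2 / (2 * s)) *
        ((Real.sqrt (2 * π * τ))⁻¹ * Real.exp (-u ^ 2 / (2 * τ)))) m]
  exact conv1d₀ s τ c w hs hτ

/-- Inductive step of the CARD marginal property:
`∫ φ(y'; m(y), σ²I) φ(y; √ᾱ y₀ + (1−√ᾱ)f, (1−ᾱ)I) dy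
  = φ(y'; √b y₀ + (1−√b)f, (1−b)I)`,
where `m(y) = √b y₀ + (1−√b)f + √(1−b−σ²)(y − √ᾱ y₀ − (1−√ᾱ)f)/√(1−ᾱ)`. -/
theorem stmt_14 (d : ℕ) (hd : 1 ≤ d)
    (a b : ℝ) (ha : a ∈ Set.Ioo (0 : ℝ) 1) (hb : b ∈ Set.Ioo (0 : ℝ) 1)
    (abar : ℝ) (habar : abar = a * b)
    (σ : ℝ) (hσ : 0 < σ) (hσb : σ ^ 2 ≤ 1 - b)
    (y₀ f : Fin d → ℝ) :
    ∀ y' : Fin d → ℝ,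
      (∫ y : Fin d → ℝ,
          mvnPdf (Real.sqrt b • y₀ + (1 - Real.sqrt b) • f
              + (Real.sqrt (1 - b - σ ^ 2) / Real.sqrt (1 - abar)) •
                  (y - Real.sqrt abar • y₀ - (1 - Real.sqrt abar) • f))
            (σ ^ 2 • (1 : Matrix (Fin d) (Fin d) ℝ)) y'
          * mvnPdf (Real.sqrt abar • y₀ + (1 - Real.sqrt abar) • f)
              ((1 - abar) • (1 : Matrix (Fin d) (Fin d) ℝ)) y)
      = mvnPdf (Real.sqrt b • y₀ + (1 - Real.sqrt b) • f)
          ((1 - b) • (1 : Matrix (Fin d) (Fin d) ℝ)) y' := by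
  intro y'
  obtain ⟨ha0, ha1⟩ := ha
  obtain ⟨hb0, hb1⟩ := hb
  have habar0 : 0 < abar := by rw [habar]; positivity
  have habar1 : abar < 1 := by
    rw [habar]
    calc a * b < 1 * 1 := by
          apply mul_lt_mul' ha1.le hb1 hb0.le one_pos
      _ = 1 := by ring
  have hτ : 0 < 1 - abar := by linarith
  have hs : 0 < σ ^ 2 := by positivity
  have h1b : 0 < 1 - b := by nlinarith
  set c : ℝ := Real.sqrt (1 - b - σ ^ 2) / Real.sqrt (1 - abar) with hc_def
  have hc2 : σ ^ 2 + c ^ 2 * (1 - abar) = 1 - b := by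
    rw [hc_def, div_pow, Real.sq_sqrt (by linarith), Real.sq_sqrt hτ.le]
    field_simp
    ring
  have key : ∀ y : Fin d → ℝ,
      mvnPdf (Real.sqrt b • y₀ + (1 - Real.sqrt b) • f
          + c • (y - Real.sqrt abar • y₀ - (1 - Real.sqrt abar) • f))
        (σ ^ 2 • (1 : Matrix (Fin d) (Fin d) ℝ)) y'
      * mvnPdf (Real.sqrt abar • y₀ + (1 - Real.sqrt abar) • f)
          ((1 - abar) • (1 : Matrix (Fin d) (Fin d) ℝ)) y
      = ∏ i, ((Real.sqrt (2 * π * σ ^ 2))⁻¹ *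
          Real.exp (-((y' i - (Real.sqrt b * y₀ i + (1 - Real.sqrt b) * f i))
            - c * (y i - (Real.sqrt abar * y₀ i + (1 - Real.sqrt abar) * f i))) ^ 2
              / (2 * σ ^ 2)) *
          ((Real.sqrt (2 * π * (1 - abar)))⁻¹ *
            Real.exp (-(y i - (Real.sqrt abar * y₀ i + (1 - Real.sqrt abar) * f i)) ^ 2
              / (2 * (1 - abar))))) := by
    intro y
    rw [mvnPdf_smul_one _ hs, mvnPdf_smul_one _ hτ, ← Finset.prod_mul_distrib]
    refine Finset.prod_congr rfl fun i _ => ?_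
    simp only [Pi.add_apply, Pi.sub_apply, Pi.smul_apply, smul_eq_mul]
    congr 3 <;> ring
  simp_rw [key]
  rw [MeasureTheory.integral_fintype_prod_volume_eq_prod
    (f := fun i t => (Real.sqrt (2 * π * σ ^ 2))⁻¹ *
      Real.exp (-((y' i - (Real.sqrt b * y₀ i + (1 - Real.sqrt b) * f i))
        - c * (t - (Real.sqrt abar * y₀ i + (1 - Real.sqrt abar) * f i))) ^ 2 / (2 * σ ^ 2)) *
      ((Real.sqrt (2 * π * (1 - abar)))⁻¹ *
        Real.exp (-(t - (Real.sqrt abar * y₀ i + (1 - Real.sqrt abar) * f i)) ^ 2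
          / (2 * (1 - abar)))))]
  rw [mvnPdf_smul_one _ h1b]
  refine Finset.prod_congr rfl fun i _ => ?_
  rw [conv1d _ _ c _ _ hs hτ, hc2]
  simp only [Pi.add_apply, Pi.smul_apply, smul_eq_mul]
end
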